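/- arXiv:0804.1395 — 3 statements merged into one kernel-verified Lean document; each statement's English description precedes it below -/
import Mathlib

section
/- For every integer d ≥ 2 and every ε > 0 there exists η = η(ε, d) > 0 with the following property: for every a ∈ SL_d(ℂ) whose eigenvalues do not all have the same modulus, there exists a real number ω with Λ(a⁻¹)⁻¹ < ω ≤ Λ(a) such that A^η · (Λ(a)/Λ^ω(a))^{1/ε} ≤ Λ^ω(a)/λ^ω(a), where A = Λ(a)·Λ(a⁻¹), Λ(a) is the maximal modulus of the eigenvalues of a, Λ^ω(a) = min{ |μ| : μ eigenvalue of a, |μ| ≥ ω }, and λ^ω(a) = max{ |μ| : μ eigenvalue of a, |μ| < ω }. -/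
open Set

private lemma sInf_upper_eq {T : Set ℝ} (hfin : T.Finite) {x : ℝ} (hx : x ∈ T) :
    sInf {r ∈ T | x ≤ r} = x := by
  apply le_antisymm
  · exact csInf_le (hfin.subset (sep_subset _ _)).bddBelow ⟨hx, le_refl x⟩
  · exact le_csInf ⟨x, hx, le_refl x⟩ (fun r hr => hr.2)

private lemma key_gap (d : ℕ) (c : ℝ) (hc : 0 < c) (T : Set ℝ) (hfin : T.Finite)
    (hpos : ∀ r ∈ T, 0 < r) (hcard : T.ncard ≤ d) (hne : T.Nonempty)
    (hlt : sInf T < sSup T) :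
    ∃ x ∈ T, sInf T < x ∧
      (sSup T / sInf T) ^ (c / (1+c)^d) * (sSup T / x) ^ c
        ≤ x / sSup {r ∈ T | r < x} := by
  set m0 := sInf T with hm0def
  set M := sSup T with hMdef
  set A := M / m0 with hAdef
  set η := c / (1+c)^d with hηdef
  have hm0 : m0 ∈ T := hne.csInf_mem hfin
  have hM : M ∈ T := hne.csSup_mem hfin
  have hm0pos : 0 < m0 := hpos _ hm0
  have hMpos : 0 < M := hpos _ hM
  have hA1 : 1 < A := (one_lt_div hm0pos).2 hlt
  have hA0 : 0 < A := lt_trans one_pos hA1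
  by_contra hcon
  push_neg at hcon
  have claim : ∀ k : ℕ, ∀ x ∈ T, ({r ∈ T | x < r}).ncard = k →
      M / x ≤ A ^ (η * ((1+c)^k - 1) / c) := by
    intro k
    induction k with
    | zero =>
      intro x hx h0
      have hSfin : ({r ∈ T | x < r}).Finite := hfin.subset (sep_subset _ _)
      have hempty : {r ∈ T | x < r} = ∅ := (Set.ncard_eq_zero hSfin).1 h0
      have hxM : M ≤ x := by
        by_contra hh
        push_neg at hh
        have : M ∈ {r ∈ T | x < r} := ⟨hM, hh⟩
        rw [hempty] at this
        exact this
      have hMx : x ≤ M := le_csSup hfin.bddAbove hx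
      have hex : x = M := le_antisymm hMx hxM
      have : (1+c:ℝ)^(0:ℕ) - 1 = 0 := by norm_num
      rw [this, hex]
      simp [div_self (ne_of_gt hMpos), Real.rpow_zero]
    | succ k ih =>
      intro x hx hcardx
      set S := {r ∈ T | x < r} with hSdef
      have hSfin : S.Finite := hfin.subset (sep_subset _ _)
      have hSne : S.Nonempty := by
        rw [Set.nonempty_iff_ne_empty]
        intro hh
        rw [hh, Set.ncard_empty] at hcardx
        exact Nat.succ_ne_zero k hcardx.symm
      set y := sInf S with hydef
      have hyS : y ∈ S := hSne.csInf_mem hSfin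
      have hyT : y ∈ T := hyS.1
      have hxy : x < y := hyS.2
      have hset : {r ∈ T | y < r} = S \ {y} := by
        ext r
        simp only [Set.mem_setOf_eq, Set.mem_diff, Set.mem_singleton_iff, hSdef]
        constructor
        · rintro ⟨hrT, hyr⟩
          exact ⟨⟨hrT, hxy.trans hyr⟩, ne_of_gt hyr⟩
        · rintro ⟨⟨hrT, hxr⟩, hry⟩
          have hle : y ≤ r := csInf_le hSfin.bddBelow ⟨hrT, hxr⟩
          exact ⟨hrT, lt_of_le_of_ne hle (fun hh => hry hh.symm)⟩
      have hcardy : ({r ∈ T | y < r}).ncard = k := by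
        rw [hset, Set.ncard_diff_singleton_of_mem hyS, hcardx]
        omega
      have ihy := ih y hyT hcardy
      have hsup : sSup {r ∈ T | r < y} = x := by
        apply le_antisymm
        · refine csSup_le ⟨x, hx, hxy⟩ fun r hr => ?_
          obtain ⟨hrT, hry⟩ := hr
          by_contra hh
          push_neg at hh
          exact absurd (csInf_le hSfin.bddBelow ⟨hrT, hh⟩) (not_le.2 hry)
        · exact le_csSup (hfin.subset (sep_subset _ _)).bddAbove ⟨hx, hxy⟩
      have hm0y : m0 < y := lt_of_le_of_lt (csInf_le hfin.bddBelow hx) hxy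
      have hneg := hcon y hyT hm0y
      rw [hsup] at hneg
      have hxpos := hpos x hx
      have hypos := hpos y hyT
      have hMy : 0 < M / y := div_pos hMpos hypos
      have hMx_eq : M / x = (M / y) * (y / x) := by
        field_simp
      have h1 : M / x < (M / y) * (A ^ η * (M / y) ^ c) := by
        rw [hMx_eq]
        exact mul_lt_mul_of_pos_left hneg hMy
      have h2 : (M / y) * (A ^ η * (M / y) ^ c) = A ^ η * (M / y) ^ (1 + c) := by
        rw [Real.rpow_add hMy, Real.rpow_one]
        ring
      have h3 : (M / y) ^ (1 + c) ≤ (A ^ (η * ((1+c)^k - 1) / c)) ^ (1 + c) :=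
        Real.rpow_le_rpow (le_of_lt hMy) ihy (by positivity)
      have h4 : (A ^ (η * ((1+c)^k - 1) / c)) ^ (1 + c)
          = A ^ ((η * ((1+c)^k - 1) / c) * (1 + c)) := by
        rw [← Real.rpow_mul (le_of_lt hA0)]
      have h5 : A ^ η * A ^ ((η * ((1+c)^k - 1) / c) * (1 + c))
          = A ^ (η + (η * ((1+c)^k - 1) / c) * (1 + c)) := by
        rw [← Real.rpow_add hA0]
      have h6 : η + (η * ((1+c)^k - 1) / c) * (1 + c)
          = η * ((1+c)^(k+1) - 1) / c := by
        rw [pow_succ]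
        field_simp
        ring
      refine le_of_lt ?_
      calc M / x < (M / y) * (A ^ η * (M / y) ^ c) := h1
        _ = A ^ η * (M / y) ^ (1 + c) := h2
        _ ≤ A ^ η * (A ^ (η * ((1+c)^k - 1) / c)) ^ (1 + c) := by
            apply mul_le_mul_of_nonneg_left h3 (le_of_lt (Real.rpow_pos_of_pos hA0 η))
        _ = A ^ (η * ((1+c)^(k+1) - 1) / c) := by rw [h4, h5, h6]
  set k0 := ({r ∈ T | m0 < r}).ncard with hk0def
  have hk0 : k0 ≤ d :=
    le_trans (Set.ncard_le_ncard (sep_subset _ _) hfin) hcard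
  have hfinal := claim k0 m0 hm0 rfl
  have hE : η * ((1+c)^k0 - 1) / c < 1 := by
    rw [hηdef]
    have h1c : (1:ℝ) < 1 + c := by linarith
    have hpow : (1+c:ℝ)^k0 ≤ (1+c)^d := pow_le_pow_right₀ (le_of_lt h1c) hk0
    have hd : (0:ℝ) < (1+c)^d := by positivity
    rw [div_lt_one]
    · calc c / (1+c)^d * ((1+c)^k0 - 1) = c * (((1+c)^k0 - 1) / (1+c)^d) := by ring
        _ < c * 1 := by
            apply mul_lt_mul_of_pos_left _ hc
            rw [div_lt_one hd]
            linarith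
        _ = c := mul_one c
    · exact hc
  have : A ^ (η * ((1+c)^k0 - 1) / c) < A := by
    nth_rewrite 2 [← Real.rpow_one A]
    exact (Real.rpow_lt_rpow_left_iff hA1).2 hE
  exact absurd hfinal (not_le.2 this)

/-- **Almost proximal gap.** For every `d ≥ 2` and `ε > 0` there is `η = η(ε,d) > 0` such that
for every `a ∈ SL_d(ℂ)` whose eigenvalues do not all have the same modulus, there is a real
number `ω` with `Λ(a⁻¹)⁻¹ < ω ≤ Λ(a)` and
`A^η · (Λ(a)/Λ^ω(a))^{1/ε} ≤ Λ^ω(a)/λ^ω(a)`, where `A = Λ(a)·Λ(a⁻¹)`. -/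
theorem almost_proximal_gap :
    ∀ d : ℕ, 2 ≤ d → ∀ ε : ℝ, 0 < ε → ∃ η : ℝ, 0 < η ∧
      ∀ a : Matrix (Fin d) (Fin d) ℂ, a.det = 1 →
        (∃ μ ∈ spectrum ℂ a, ∃ ν ∈ spectrum ℂ a, ‖μ‖ ≠ ‖ν‖) →
        ∃ ω : ℝ,
          sInf ((fun z : ℂ => ‖z‖) '' spectrum ℂ a) < ω ∧
          ω ≤ sSup ((fun z : ℂ => ‖z‖) '' spectrum ℂ a) ∧
          (sSup ((fun z : ℂ => ‖z‖) '' spectrum ℂ a) * sSup ((fun z : ℂ => ‖z‖) '' spectrum ℂ a⁻¹)) ^ η *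
              (sSup ((fun z : ℂ => ‖z‖) '' spectrum ℂ a) /
                sInf {r ∈ (fun z : ℂ => ‖z‖) '' spectrum ℂ a | ω ≤ r}) ^ (1 / ε) ≤
            sInf {r ∈ (fun z : ℂ => ‖z‖) '' spectrum ℂ a | ω ≤ r} /
              sSup {r ∈ (fun z : ℂ => ‖z‖) '' spectrum ℂ a | r < ω} := by
  intro d hd ε hε
  set c := 1 / ε with hcdef
  have hc : 0 < c := by positivity
  refine ⟨c / (1+c)^d, by positivity, ?_⟩
  intro a hdet hmod
  classical
  -- a is a unit
  have hU : IsUnit a := (Matrix.isUnit_iff_isUnit_det a).2 (by rw [hdet]; exact isUnit_one)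
  set T := (fun z : ℂ => ‖z‖) '' spectrum ℂ a with hTdef
  have hspecfin : (spectrum ℂ a).Finite := Matrix.finite_spectrum a
  have hTfin : T.Finite := hspecfin.image _
  -- positivity of elements of T
  have hzero : (0:ℂ) ∉ spectrum ℂ a := (spectrum.zero_notMem_iff ℂ).mpr hU
  have hpos : ∀ r ∈ T, 0 < r := by
    rintro r ⟨μ, hμ, rfl⟩
    have : μ ≠ 0 := fun h => hzero (h ▸ hμ)
    exact norm_pos_iff.2 this
  -- nonempty and sInf < sSup
  obtain ⟨μ, hμ, ν, hν, hμν⟩ := hmod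
  have hμT : ‖μ‖ ∈ T := ⟨μ, hμ, rfl⟩
  have hνT : ‖ν‖ ∈ T := ⟨ν, hν, rfl⟩
  have hne : T.Nonempty := ⟨_, hμT⟩
  have hlt : sInf T < sSup T := by
    rcases lt_or_gt_of_ne hμν with h | h
    · exact lt_of_le_of_lt (csInf_le hTfin.bddBelow hμT)
        (lt_of_lt_of_le h (le_csSup hTfin.bddAbove hνT))
    · exact lt_of_le_of_lt (csInf_le hTfin.bddBelow hνT)
        (lt_of_lt_of_le h (le_csSup hTfin.bddAbove hμT))
  -- cardinality bound
  have hcard : T.ncard ≤ d := by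
    have h1 : T.ncard ≤ (spectrum ℂ a).ncard := Set.ncard_image_le hspecfin
    refine le_trans h1 ?_
    -- spectrum of a = spectrum of the endomorphism
    set f := Matrix.toLinAlgEquiv (Pi.basisFun ℂ (Fin d)) a with hfdef
    have hspec : spectrum ℂ a = spectrum ℂ f :=
      (AlgEquiv.spectrum_eq (Matrix.toLinAlgEquiv (Pi.basisFun ℂ (Fin d))) a).symm
    have hint : IsIntegral ℂ f := ⟨f.charpoly, f.charpoly_monic, f.aeval_self_charpoly⟩
    have hpne : minpoly ℂ f ≠ 0 := minpoly.ne_zero hint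
    have hsub : spectrum ℂ f ⊆ ↑((minpoly ℂ f).roots.toFinset) := by
      intro z hz
      have h1 : Module.End.HasEigenvalue f z :=
        Module.End.hasEigenvalue_iff_mem_spectrum.2 hz
      have h2 : (minpoly ℂ f).IsRoot z := Module.End.hasEigenvalue_iff_isRoot.1 h1
      simp only [Multiset.mem_toFinset, Finset.coe_sort_coe, Finset.mem_coe]
      rw [Polynomial.mem_roots hpne]
      exact h2
    calc (spectrum ℂ a).ncard = (spectrum ℂ f).ncard := by rw [hspec]
      _ ≤ (((minpoly ℂ f).roots.toFinset : Set ℂ)).ncard :=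
          Set.ncard_le_ncard hsub (Set.finite_coe_iff.1 (by infer_instance))
      _ = (minpoly ℂ f).roots.toFinset.card := Set.ncard_coe_finset _
      _ ≤ Multiset.card (minpoly ℂ f).roots := Multiset.toFinset_card_le _
      _ ≤ (minpoly ℂ f).natDegree := Polynomial.card_roots' _
      _ ≤ f.charpoly.natDegree := Polynomial.natDegree_le_of_dvd
          (LinearMap.minpoly_dvd_charpoly f) f.charpoly_monic.ne_zero
      _ = d := by rw [f.charpoly_natDegree, Module.finrank_fin_fun]
  -- spectrum of the inverse
  have hinv_spec : spectrum ℂ a⁻¹ = (spectrum ℂ a)⁻¹ := by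
    have h1 := spectrum.map_inv (𝕜 := ℂ) hU.unit
    rw [hU.unit_spec] at h1
    rw [h1, Matrix.coe_units_inv, hU.unit_spec]
  have himg : (fun z : ℂ => ‖z‖) '' spectrum ℂ a⁻¹ = (·⁻¹) '' T := by
    rw [hinv_spec, ← Set.image_inv_eq_inv, ← Set.image_comp, hTdef, ← Set.image_comp]
    apply Set.image_congr
    intro z hz
    simp [map_inv₀]
  have hsup_inv : sSup ((fun z : ℂ => ‖z‖) '' spectrum ℂ a⁻¹) = (sInf T)⁻¹ := by
    rw [himg]
    apply le_antisymm
    · refine csSup_le (hne.image _) fun r hr => ?_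
      obtain ⟨t, ht, rfl⟩ := hr
      exact inv_anti₀ (hpos _ (hne.csInf_mem hTfin)) (csInf_le hTfin.bddBelow ht)
    · exact le_csSup (hTfin.image _).bddAbove ⟨sInf T, hne.csInf_mem hTfin, rfl⟩
  -- apply the key lemma
  obtain ⟨x, hxT, hxlt, hxkey⟩ := key_gap d c hc T hTfin hpos hcard hne hlt
  refine ⟨x, hxlt, le_csSup hTfin.bddAbove hxT, ?_⟩
  rw [sInf_upper_eq hTfin hxT, hsup_inv, ← div_eq_mul_inv]
  exact hxkey
end

section
/- Let a ∈ SL_d(ℂ). Then there exists h ∈ SL_d(ℂ) such that ‖h a h⁻¹‖ ≤ d · Λ(a) and max{‖h‖, ‖h⁻¹‖} ≤ ‖a‖^{(d−1)/2}, where Λ(a) is the maximal modulus of the eigenvalues of a and ‖·‖ is the operator norm induced by the Hermitian norm on ℂ^d. -/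
/-- The operator norm on `d×d` complex matrices induced by the Hermitian norm on `ℂ^d`. -/
noncomputable def matrixOpNorm {d : ℕ} (M : Matrix (Fin d) (Fin d) ℂ) : ℝ :=
  ‖LinearMap.toContinuousLinearMap (Matrix.toEuclideanLin M)‖

open Matrix in
lemma opNorm_le_of_sq {d : ℕ} (M : Matrix (Fin d) (Fin d) ℂ) {C : ℝ} (hC : 0 ≤ C)
    (h : ∀ x : Fin d → ℂ, ∑ i, ‖M.mulVec x i‖ ^ 2 ≤ C ^ 2 * ∑ j, ‖x j‖ ^ 2) :
    matrixOpNorm M ≤ C := by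
  apply ContinuousLinearMap.opNorm_le_bound _ hC
  intro y
  have hy : y = (WithLp.equiv 2 (Fin d → ℂ)).symm ((WithLp.equiv 2 (Fin d → ℂ)) y) := rfl
  set x : Fin d → ℂ := (WithLp.equiv 2 (Fin d → ℂ)) y with hx
  have h1 : (LinearMap.toContinuousLinearMap (Matrix.toEuclideanLin M)) y
      = (WithLp.equiv 2 (Fin d → ℂ)).symm (M.mulVec x) := by
    rw [hy]
    exact Matrix.toEuclideanLin_apply_piLp_toLp M x
  rw [h1]
  have h2 : ‖(WithLp.equiv 2 (Fin d → ℂ)).symm (M.mulVec x)‖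
      = Real.sqrt (∑ i, ‖M.mulVec x i‖ ^ 2) := by
    rw [EuclideanSpace.norm_eq]
    rfl
  have h3 : ‖y‖ = Real.sqrt (∑ j, ‖x j‖ ^ 2) := by
    rw [EuclideanSpace.norm_eq]
    rfl
  rw [h2, h3]
  calc Real.sqrt (∑ i, ‖M.mulVec x i‖ ^ 2) ≤ Real.sqrt (C ^ 2 * ∑ j, ‖x j‖ ^ 2) :=
        Real.sqrt_le_sqrt (h x)
    _ = C * Real.sqrt (∑ j, ‖x j‖ ^ 2) := by
        rw [Real.sqrt_mul (sq_nonneg C), Real.sqrt_sq hC]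

lemma opNorm_le_of_entries {d : ℕ} (M : Matrix (Fin d) (Fin d) ℂ) {c : ℝ} (hc : 0 ≤ c)
    (h : ∀ i j, ‖M i j‖ ≤ c) : matrixOpNorm M ≤ d * c := by
  apply opNorm_le_of_sq M (by positivity)
  intro x
  have key : ∀ i, ‖M.mulVec x i‖ ^ 2 ≤ c ^ 2 * (∑ j, ‖x j‖) ^ 2 := by
    intro i
    have h1 : ‖M.mulVec x i‖ ≤ c * ∑ j, ‖x j‖ := by
      calc ‖M.mulVec x i‖ = ‖∑ j, M i j * x j‖ := rfl
        _ ≤ ∑ j, ‖M i j * x j‖ := norm_sum_le _ _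
        _ ≤ ∑ j, c * ‖x j‖ := by
            refine Finset.sum_le_sum fun j _ => ?_
            rw [norm_mul]
            exact mul_le_mul_of_nonneg_right (h i j) (norm_nonneg _)
        _ = c * ∑ j, ‖x j‖ := by rw [Finset.mul_sum]
    calc ‖M.mulVec x i‖ ^ 2 ≤ (c * ∑ j, ‖x j‖) ^ 2 := by
          apply sq_le_sq' _ h1
          have : 0 ≤ c * ∑ j, ‖x j‖ := by positivity
          linarith [norm_nonneg (M.mulVec x i)]
      _ = c ^ 2 * (∑ j, ‖x j‖) ^ 2 := by ring
  have cs : (∑ j, ‖x j‖) ^ 2 ≤ d * ∑ j, ‖x j‖ ^ 2 := by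
    have := sq_sum_le_card_mul_sum_sq (s := Finset.univ) (f := fun j => ‖x j‖)
    simpa using this
  calc ∑ i, ‖M.mulVec x i‖ ^ 2 ≤ ∑ _i : Fin d, c ^ 2 * (∑ j, ‖x j‖) ^ 2 :=
        Finset.sum_le_sum fun i _ => key i
    _ = d * (c ^ 2 * (∑ j, ‖x j‖) ^ 2) := by simp [Finset.sum_const, Finset.card_univ, nsmul_eq_mul]
    _ ≤ d * (c ^ 2 * (d * ∑ j, ‖x j‖ ^ 2)) := by
        apply mul_le_mul_of_nonneg_left _ (by positivity)
        exact mul_le_mul_of_nonneg_left cs (by positivity)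
    _ = (d * c) ^ 2 * ∑ j, ‖x j‖ ^ 2 := by ring

lemma opNorm_diagonal_le {d : ℕ} (v : Fin d → ℂ) {c : ℝ} (hc : 0 ≤ c)
    (h : ∀ i, ‖v i‖ ≤ c) : matrixOpNorm (Matrix.diagonal v) ≤ c := by
  apply opNorm_le_of_sq _ hc
  intro x
  rw [Finset.mul_sum]
  refine Finset.sum_le_sum fun i _ => ?_
  rw [Matrix.mulVec_diagonal, norm_mul, mul_pow]
  apply mul_le_mul_of_nonneg_right _ (sq_nonneg _)
  apply sq_le_sq' _ (h i)
  linarith [norm_nonneg (v i), h i]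

open FiniteDimensional Module Submodule in
lemma schur_flag : ∀ (n : ℕ) (V : Type) (_ : NormedAddCommGroup V)
    (_ : InnerProductSpace ℂ V) (_ : FiniteDimensional ℂ V),
    Module.finrank ℂ V = n → ∀ f : V →ₗ[ℂ] V,
    ∃ b : Fin n → V, Orthonormal ℂ b ∧
      ∀ j, f (b j) ∈ Submodule.span ℂ (b '' Set.Iic j) := by
  intro n
  induction n with
  | zero =>
    intro V _ _ _ _ f
    refine ⟨Fin.elim0, ?_, fun j => j.elim0⟩
    rw [orthonormal_iff_ite]
    intro i; exact i.elim0
  | succ n ih =>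
    intro V _ _ _ hV f
    have : Nontrivial V := by
      have h0 : 0 < Module.finrank ℂ V := by omega
      exact Module.nontrivial_of_finrank_pos h0
    obtain ⟨μ, hμ⟩ := Module.End.exists_eigenvalue (LinearMap.adjoint f)
    obtain ⟨v, hv⟩ := hμ.exists_hasEigenvector
    have hv0 : v ≠ 0 := hv.right
    set u : V := (‖v‖ : ℂ)⁻¹ • v with hu
    have hu0 : u ≠ 0 := by
      simp only [hu, smul_ne_zero_iff]
      exact ⟨by simp [hv0], hv0⟩
    have hunorm : ‖u‖ = 1 := by
      rw [hu, norm_smul]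
      simp [norm_inv, hv0, norm_ne_zero_iff.mpr hv0]
    have huev : LinearMap.adjoint f u = μ • u := by
      rw [hu, map_smul, hv.apply_eq_smul, smul_comm]
    set W := (ℂ ∙ u)ᗮ with hW
    have hWrank : Module.finrank ℂ W = n := by
      have h1 : Module.finrank ℂ (ℂ ∙ u) + Module.finrank ℂ W = Module.finrank ℂ V :=
        (ℂ ∙ u).finrank_add_finrank_orthogonal
      rw [finrank_span_singleton hu0] at h1
      omega
    have hWinv : ∀ w ∈ W, f w ∈ W := by
      intro w hw
      rw [hW, Submodule.mem_orthogonal]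
      intro x hx
      rw [Submodule.mem_span_singleton] at hx
      obtain ⟨c, rfl⟩ := hx
      rw [inner_smul_left]
      have : (inner ℂ u (f w) : ℂ) = 0 := by
        rw [← LinearMap.adjoint_inner_left, huev, inner_smul_left]
        have := (Submodule.mem_orthogonal _ _).mp hw u (Submodule.mem_span_singleton_self u)
        rw [this, mul_zero]
      rw [this, mul_zero]
    obtain ⟨c, hc_on, hc_tri⟩ := ih W inferInstance inferInstance inferInstance hWrank
      (f.restrict hWinv)
    set b : Fin (n + 1) → V := Fin.snoc (fun i => (c i : V)) u with hb
    have hb_cast : ∀ i : Fin n, b i.castSucc = (c i : V) := fun i => Fin.snoc_castSucc _ _ _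
    have hb_last : b (Fin.last n) = u := Fin.snoc_last _ _
    have horth_u_c : ∀ j : Fin n, (inner ℂ u ((c j : V)) : ℂ) = 0 := fun j =>
      (Submodule.mem_orthogonal _ _).mp (c j).2 u (Submodule.mem_span_singleton_self u)
    have horth_c_u : ∀ j : Fin n, (inner ℂ ((c j : V)) u : ℂ) = 0 := fun j =>
      (Submodule.mem_orthogonal' _ _).mp (c j).2 u (Submodule.mem_span_singleton_self u)
    have hbon : Orthonormal ℂ b := by
      rw [orthonormal_iff_ite]
      intro i j
      induction i using Fin.lastCases with
      | last =>
        induction j using Fin.lastCases with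
        | last =>
          rw [if_pos rfl, hb_last]
          rw [@inner_self_eq_norm_sq_to_K ℂ, hunorm]
          norm_num
        | cast j =>
          rw [hb_last, hb_cast, if_neg (by simp [Fin.ext_iff]; omega)]
          exact horth_u_c j
      | cast i =>
        induction j using Fin.lastCases with
        | last =>
          rw [hb_last, hb_cast, if_neg (by simp [Fin.ext_iff]; omega)]
          exact horth_c_u i
        | cast j =>
          rw [hb_cast, hb_cast]
          have h1 := (orthonormal_iff_ite.mp hc_on) i j
          rw [Submodule.coe_inner] at h1
          rw [h1]
          simp [Fin.ext_iff, Fin.castSucc]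
    refine ⟨b, hbon, ?_⟩
    intro j
    induction j using Fin.lastCases with
    | last =>
      have hspan : Submodule.span ℂ (Set.range b) = ⊤ := by
        apply LinearIndependent.span_eq_top_of_card_eq_finrank hbon.linearIndependent
        simp [hV]
      have : b '' Set.Iic (Fin.last n) = Set.range b := by
        rw [← Set.image_univ]
        ext k
        simp [Fin.le_last]
      rw [this, hspan]
      trivial
    | cast i =>
      rw [hb_cast]
      have h1 : f ((c i : V)) = ((f.restrict hWinv) (c i) : V) := rfl
      rw [h1]
      have h2 : ((f.restrict hWinv) (c i) : V) ∈
          Submodule.map W.subtype (Submodule.span ℂ (c '' Set.Iic i)) :=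
        Submodule.mem_map_of_mem (hc_tri i)
      rw [Submodule.map_span] at h2
      refine Submodule.span_mono ?_ h2
      rintro x ⟨y, ⟨k, hk, rfl⟩, rfl⟩
      exact ⟨k.castSucc, by simpa using hk, by simp [hb_cast k]⟩

open Matrix in
lemma matrix_schur (d : ℕ) (a : Matrix (Fin d) (Fin d) ℂ) :
    ∃ U T : Matrix (Fin d) (Fin d) ℂ, Uᴴ * U = 1 ∧ U * Uᴴ = 1 ∧
      a = U * T * Uᴴ ∧ (∀ i j : Fin d, j < i → T i j = 0) ∧
      (∀ i j, ‖T i j‖ ≤ matrixOpNorm a) := by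
  obtain ⟨b, hon, htri⟩ := schur_flag d (EuclideanSpace ℂ (Fin d)) inferInstance inferInstance
    inferInstance (finrank_euclideanSpace_fin) (Matrix.toEuclideanLin a)
  set g := Matrix.toEuclideanLin a with hg
  set U : Matrix (Fin d) (Fin d) ℂ := Matrix.of (fun i j => b j i) with hU
  have hinner : ∀ x y : EuclideanSpace ℂ (Fin d),
      (inner ℂ x y : ℂ) = ∑ k, (starRingEnd ℂ) (x k) * y k := by
    intro x y
    rw [PiLp.inner_apply]
    refine Finset.sum_congr rfl fun k _ => ?_
    rw [RCLike.inner_apply]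
    ring
  have hUU : Uᴴ * U = 1 := by
    ext i j
    rw [Matrix.mul_apply, Matrix.one_apply]
    have h1 := orthonormal_iff_ite.mp hon i j
    rw [hinner] at h1
    simp only [Matrix.conjTranspose_apply, hU, Matrix.of_apply, Matrix.star_apply]
    rw [← h1]
    rfl
  have hUUc : U * Uᴴ = 1 := mul_eq_one_comm.mp hUU
  set T : Matrix (Fin d) (Fin d) ℂ := Uᴴ * a * U with hT
  have haT : a = U * T * Uᴴ := by
    rw [hT]
    calc a = (U * Uᴴ) * a * (U * Uᴴ) := by rw [hUUc]; simp [Matrix.mul_assoc]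
      _ = U * (Uᴴ * a * U) * Uᴴ := by simp only [Matrix.mul_assoc]
  -- entry formula
  have hentry : ∀ i j, T i j = (inner ℂ (b i) (g (b j)) : ℂ) := by
    intro i j
    rw [hinner]
    have hgb : ∀ k, (g (b j)) k = a.mulVec (b j) k := by
      intro k
      have : g (b j) = (WithLp.equiv 2 (Fin d → ℂ)).symm (a.mulVec ((WithLp.equiv 2 _) (b j))) :=
        Matrix.toEuclideanLin_apply_piLp_toLp a (WithLp.equiv 2 _ (b j))
      rw [this]
      rfl
    rw [hT]
    simp only [Matrix.mul_apply, Matrix.conjTranspose_apply, hU, Matrix.of_apply,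
      Matrix.star_apply, hgb, Matrix.mulVec, dotProduct, Finset.sum_mul,
      Finset.mul_sum, starRingEnd_apply]
    rw [Finset.sum_comm]
    refine Finset.sum_congr rfl fun k _ => Finset.sum_congr rfl fun l _ => by ring
  have htri' : ∀ i j : Fin d, j < i → T i j = 0 := by
    intro i j hij
    rw [hentry]
    have hle : Submodule.span ℂ (b '' Set.Iic j) ≤ (ℂ ∙ b i)ᗮ := by
      rw [Submodule.span_le]
      rintro x ⟨k, hk, rfl⟩
      rw [SetLike.mem_coe, Submodule.mem_orthogonal]
      intro y hy
      rw [Submodule.mem_span_singleton] at hy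
      obtain ⟨c, rfl⟩ := hy
      rw [inner_smul_left]
      have hik : i ≠ k := fun h => absurd hij (by rw [h] at *; exact not_lt.mpr hk)
      have := orthonormal_iff_ite.mp hon i k
      rw [if_neg hik] at this
      rw [this, mul_zero]
    have hmem := hle (htri j)
    rw [Submodule.mem_orthogonal] at hmem
    exact hmem (b i) (Submodule.mem_span_singleton_self _)
  refine ⟨U, T, hUU, hUUc, haT, htri', ?_⟩
  intro i j
  rw [hentry]
  calc ‖(inner ℂ (b i) (g (b j)) : ℂ)‖ = ‖(inner ℂ (b i) (g (b j)) : ℂ)‖ := rfl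
    _ ≤ ‖b i‖ * ‖g (b j)‖ := norm_inner_le_norm _ _
    _ = ‖(LinearMap.toContinuousLinearMap g) (b j)‖ := by
        rw [hon.1 i, one_mul]; rfl
    _ ≤ matrixOpNorm a * ‖b j‖ := ContinuousLinearMap.le_opNorm _ _
    _ = matrixOpNorm a := by rw [hon.1 j, mul_one]

open Matrix
open scoped Matrix.Norms.L2Operator

lemma matrixOpNorm_eq {d : ℕ} (M : Matrix (Fin d) (Fin d) ℂ) : matrixOpNorm M = ‖M‖ := rfl

lemma matrixOpNorm_mul_le {d : ℕ} (A B : Matrix (Fin d) (Fin d) ℂ) :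
    matrixOpNorm (A * B) ≤ matrixOpNorm A * matrixOpNorm B := by
  simp only [matrixOpNorm_eq]
  exact Matrix.l2_opNorm_mul A B

lemma matrixOpNorm_unitary {d : ℕ} (hd : 0 < d) (U : Matrix (Fin d) (Fin d) ℂ)
    (hUU : Uᴴ * U = 1) : matrixOpNorm U = 1 := by
  haveI : Nonempty (Fin d) := ⟨⟨0, hd⟩⟩
  haveI : Nontrivial (Matrix (Fin d) (Fin d) ℂ) := inferInstance
  have h1 : ‖U‖ * ‖U‖ = 1 := by
    rw [← Matrix.l2_opNorm_conjTranspose_mul_self U, hUU, CStarRing.norm_one]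
  rw [matrixOpNorm_eq]
  rcases mul_self_eq_one_iff.mp h1 with h | h
  · exact h
  · exfalso; nlinarith [norm_nonneg U]


/-- **Conjugating to almost minimal norm.** Let `a ∈ SL_d(ℂ)`. Then there is `h ∈ SL_d(ℂ)` with
`‖h a h⁻¹‖ ≤ d · Λ(a)` and `max{‖h‖, ‖h⁻¹‖} ≤ ‖a‖^{(d−1)/2}`, where `Λ(a)` is the maximal
modulus of the eigenvalues of `a`. -/
theorem conjugate_norm_bound (d : ℕ) (a : Matrix (Fin d) (Fin d) ℂ) (ha : a.det = 1) :
    ∃ h : Matrix (Fin d) (Fin d) ℂ, h.det = 1 ∧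
      matrixOpNorm (h * a * h⁻¹) ≤ (d : ℝ) * sSup ((fun z : ℂ => ‖z‖) '' spectrum ℂ a) ∧
      max (matrixOpNorm h) (matrixOpNorm h⁻¹) ≤
        matrixOpNorm a ^ (((d : ℝ) - 1) / 2) := by
  rcases Nat.eq_zero_or_pos d with hd | hd
  · -- degenerate case d = 0
    subst hd
    have hzero : ∀ M : Matrix (Fin 0) (Fin 0) ℂ, matrixOpNorm M = 0 := by
      intro M
      have : LinearMap.toContinuousLinearMap (Matrix.toEuclideanLin M) = 0 :=
        Subsingleton.elim _ _
      rw [matrixOpNorm, this, norm_zero]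
    refine ⟨1, Matrix.det_one, ?_, ?_⟩
    · rw [hzero]
      simp
    · rw [hzero, hzero, hzero]
      rw [show (((0:ℕ):ℝ) - 1) / 2 = -(1/2) by norm_num]
      rw [Real.zero_rpow (by norm_num)]
      simp
  · obtain ⟨U, T, hUU, hUUc, haT, hTtri, hTbound⟩ := matrix_schur d a
    set N := matrixOpNorm a with hNdef
    set i0 : Fin d := ⟨0, hd⟩ with hi0
    have hdet_mul : U.det * Uᴴ.det = 1 := by
      rw [← Matrix.det_mul, hUUc, Matrix.det_one]
    have hdetT : T.det = 1 := by
      have h1 : a.det = U.det * T.det * Uᴴ.det := by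
        rw [haT, Matrix.det_mul, Matrix.det_mul]
      rw [ha] at h1
      calc T.det = T.det * (U.det * Uᴴ.det) := by rw [hdet_mul, mul_one]
        _ = U.det * T.det * Uᴴ.det := by ring
        _ = 1 := h1.symm
    have hTblock : T.BlockTriangular id := fun i j h => hTtri i j h
    have hdet_diag : ∏ i, T i i = 1 := by
      rw [← Matrix.det_of_upperTriangular hTblock, hdetT]
    -- characteristic polynomial style identity
    have char : ∀ z : ℂ, (z • (1 : Matrix (Fin d) (Fin d) ℂ) - a).det = ∏ i, (z - T i i) := by
      intro z
      have h1 : z • (1 : Matrix (Fin d) (Fin d) ℂ) - a = U * (z • 1 - T) * Uᴴ := by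
        rw [Matrix.mul_sub, Matrix.sub_mul, Matrix.mul_smul, Matrix.smul_mul, Matrix.mul_one,
          hUUc, ← haT]
      have h2 : (z • (1 : Matrix (Fin d) (Fin d) ℂ) - T).BlockTriangular id := by
        intro i j hij
        have hne : i ≠ j := fun h => absurd hij (by rw [h]; exact lt_irrefl _)
        simp [Matrix.one_apply_ne hne, hTtri i j hij]
      have h3 : (z • (1 : Matrix (Fin d) (Fin d) ℂ) - T).det = ∏ i, (z - T i i) := by
        rw [Matrix.det_of_upperTriangular h2]
        refine Finset.prod_congr rfl fun i _ => ?_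
        simp [Matrix.one_apply]
      rw [h1, Matrix.det_mul, Matrix.det_mul, h3]
      linear_combination (∏ i, (z - T i i)) * hdet_mul
    have hspec : spectrum ℂ a = Set.range (fun i => T i i) := by
      ext z
      rw [spectrum.mem_iff, Matrix.isUnit_iff_isUnit_det, isUnit_iff_ne_zero, not_ne_iff]
      rw [Algebra.algebraMap_eq_smul_one, char z]
      rw [Finset.prod_eq_zero_iff]
      constructor
      · rintro ⟨i, _, hi⟩
        exact ⟨i, by linear_combination -hi⟩
      · rintro ⟨i, rfl⟩
        exact ⟨i, Finset.mem_univ i, by ring⟩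
    set S := (fun z : ℂ => ‖z‖) '' spectrum ℂ a with hS
    set Λ := sSup S with hΛ
    have hSbdd : BddAbove S := by
      rw [hS, hspec]
      exact ((Set.finite_range _).image _).bddAbove
    have hSne : S.Nonempty := ⟨‖T i0 i0‖, ⟨T i0 i0, by rw [hspec]; exact ⟨i0, rfl⟩, rfl⟩⟩
    have hΛ_ge : ∀ j, ‖T j j‖ ≤ Λ := fun j =>
      le_csSup hSbdd ⟨T j j, by rw [hspec]; exact ⟨j, rfl⟩, rfl⟩
    have hΛ_leN : Λ ≤ N := by
      apply csSup_le hSne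
      rintro y ⟨z, hz, rfl⟩
      rw [hspec] at hz
      obtain ⟨i, rfl⟩ := hz
      exact hTbound i i
    have hΛ0 : 0 ≤ Λ := le_trans (norm_nonneg _) (hΛ_ge i0)
    have hΛ1 : 1 ≤ Λ := by
      have hprod : ∏ i, ‖T i i‖ = 1 := by
        rw [← norm_prod, hdet_diag, norm_one]
      have hle : (1:ℝ) ≤ Λ ^ d := by
        rw [← hprod]
        calc ∏ i, ‖T i i‖ ≤ ∏ _i : Fin d, Λ :=
              Finset.prod_le_prod (fun i _ => norm_nonneg _) (fun i _ => hΛ_ge i)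
          _ = Λ ^ d := by rw [Finset.prod_const, Finset.card_univ, Fintype.card_fin]
      by_contra hcon
      push_neg at hcon
      have : Λ ^ d < 1 := pow_lt_one₀ hΛ0 hcon (by omega)
      linarith
    have hΛpos : 0 < Λ := lt_of_lt_of_le one_pos hΛ1
    have hN1 : 1 ≤ N := le_trans hΛ1 hΛ_leN
    have hNpos : 0 < N := lt_of_lt_of_le one_pos hN1
    set t : ℝ := N / Λ with htdef
    have ht0 : 0 < t := div_pos hNpos hΛpos
    have ht1 : 1 ≤ t := (one_le_div hΛpos).mpr hΛ_leN
    have htN : t ≤ N := div_le_self (le_of_lt hNpos) hΛ1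
    set e : Fin d → ℝ := fun i => (i : ℝ) - ((d : ℝ) - 1) / 2 with he
    have hesum : ∑ i, e i = 0 := by
      have h1 : ∑ i : Fin d, ((i : ℕ) : ℝ) = ((∑ i ∈ Finset.range d, i : ℕ) : ℝ) := by
        rw [Nat.cast_sum]
        exact Fin.sum_univ_eq_sum_range (fun i => (i : ℝ)) d
      have h2 : ((∑ i ∈ Finset.range d, i : ℕ) : ℝ) * 2 = (d : ℝ) * ((d : ℝ) - 1) := by
        rw [← Nat.cast_pred hd]
        norm_cast
        exact Finset.sum_range_id_mul_two d
      rw [he]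
      rw [Finset.sum_sub_distrib, Finset.sum_const, Finset.card_univ, Fintype.card_fin]
      rw [h1]
      rw [nsmul_eq_mul]
      linarith
    set r : Fin d → ℝ := fun i => t ^ (e i) with hr
    have hr_pos : ∀ i, 0 < r i := fun i => Real.rpow_pos_of_pos ht0 _
    set w : ℂ := U.det with hw
    have hw_unit : w * star w = 1 := by
      rw [hw, ← Matrix.det_conjTranspose]
      exact hdet_mul
    have hw_ne : w ≠ 0 := by
      intro h
      rw [h, zero_mul] at hw_unit
      exact one_ne_zero hw_unit.symm
    have hw_abs : ‖w‖ = 1 := by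
      have h1 : (Complex.normSq w : ℂ) = 1 := by
        rw [← Complex.mul_conj]
        exact hw_unit
      have h2 : Complex.normSq w = 1 := by exact_mod_cast h1
      rw [Complex.norm_def, h2, Real.sqrt_one]
    set v : Fin d → ℂ := fun i => (r i : ℂ) * (if i = i0 then w else 1) with hv
    have hv_ne : ∀ i, v i ≠ 0 := by
      intro i
      rw [hv]
      apply mul_ne_zero
      · exact_mod_cast ne_of_gt (hr_pos i)
      · split <;> simp [hw_ne]
    have hv_abs : ∀ i, ‖v i‖ = r i := by
      intro i
      show ‖(r i : ℂ) * (if i = i0 then w else 1)‖ = r i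
      by_cases hi : i = i0
      · rw [if_pos hi, norm_mul, Complex.norm_real, Real.norm_eq_abs, hw_abs, mul_one,
          abs_of_pos (hr_pos i)]
      · rw [if_neg hi, mul_one, Complex.norm_real, Real.norm_eq_abs, abs_of_pos (hr_pos i)]
    have hprod_r : ∏ i, r i = 1 := by
      rw [hr, ← Real.rpow_sum_of_pos ht0 e Finset.univ, hesum, Real.rpow_zero]
    have hprod_v : ∏ i, v i = w := by
      rw [hv, Finset.prod_mul_distrib]
      rw [Finset.prod_ite_eq' Finset.univ i0 (fun _ => w)]
      rw [if_pos (Finset.mem_univ i0)]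
      have : ∏ i : Fin d, ((r i : ℝ) : ℂ) = ((∏ i, r i : ℝ) : ℂ) := by
        rw [Complex.ofReal_prod]
      rw [this, hprod_r]
      simp
    set D := Matrix.diagonal v with hD
    set Dinv := Matrix.diagonal (fun i => (v i)⁻¹) with hDinv
    have hDDinv : D * Dinv = 1 := by
      rw [hD, hDinv, Matrix.diagonal_mul_diagonal]
      have : (fun i => v i * (v i)⁻¹) = fun _ => (1:ℂ) := by
        funext i
        exact mul_inv_cancel₀ (hv_ne i)
      rw [this, Matrix.diagonal_one]
    set h := D * Uᴴ with hh
    set hinv := U * Dinv with hhinv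
    have hright : h * hinv = 1 := by
      rw [hh, hhinv]
      calc D * Uᴴ * (U * Dinv) = D * (Uᴴ * U) * Dinv := by simp only [Matrix.mul_assoc]
        _ = D * Dinv := by rw [hUU, Matrix.mul_one]
        _ = 1 := hDDinv
    have hinv_eq : h⁻¹ = hinv := Matrix.inv_eq_right_inv hright
    have hdeth : h.det = 1 := by
      rw [hh, Matrix.det_mul, hD, Matrix.det_diagonal, hprod_v]
      exact hdet_mul
    have hTback : Uᴴ * a * U = T := by
      rw [haT]
      calc Uᴴ * (U * T * Uᴴ) * U = (Uᴴ * U) * T * (Uᴴ * U) := by simp only [Matrix.mul_assoc]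
        _ = T := by rw [hUU, Matrix.one_mul, Matrix.mul_one]
    have hconj : h * a * h⁻¹ = D * T * Dinv := by
      rw [hinv_eq, hh, hhinv]
      calc D * Uᴴ * a * (U * Dinv) = D * (Uᴴ * a * U) * Dinv := by simp only [Matrix.mul_assoc]
        _ = D * T * Dinv := by rw [hTback]
    -- entry bounds for the conjugated matrix
    have hM_entries : ∀ i j, ‖(D * T * Dinv) i j‖ ≤ Λ := by
      intro i j
      have hentry : (D * T * Dinv) i j = v i * T i j * (v j)⁻¹ := by
        rw [hD, hDinv, Matrix.mul_diagonal, Matrix.diagonal_mul]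
      rw [hentry]
      rw [norm_mul, norm_mul, norm_inv, hv_abs, hv_abs]
      rcases lt_trichotomy i j with hij | hij | hij
      · -- i < j : strictly above diagonal
        have habs : ‖T i j‖ ≤ N := hTbound i j
        have hexp : (i : ℝ) - (j : ℝ) ≤ -1 := by
          have : (i : ℕ) + 1 ≤ (j : ℕ) := hij
          have := Nat.cast_le (α := ℝ).mpr this
          push_cast at this
          linarith
        have hrr : r i * (r j)⁻¹ = t ^ ((i : ℝ) - (j : ℝ)) := by
          rw [hr, ← Real.rpow_neg (le_of_lt ht0), ← Real.rpow_add ht0]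
          congr 1
          rw [he]
          ring
        have hrle : r i * (r j)⁻¹ ≤ t⁻¹ := by
          rw [hrr, ← Real.rpow_neg_one t]
          exact Real.rpow_le_rpow_of_exponent_le ht1 hexp
        have hNt : N * t⁻¹ = Λ := by
          rw [htdef]
          field_simp
        calc r i * ‖T i j‖ * (r j)⁻¹
            = ‖T i j‖ * (r i * (r j)⁻¹) := by ring
          _ ≤ N * t⁻¹ := by
              apply mul_le_mul habs hrle
              · positivity
              · exact le_of_lt hNpos
          _ = Λ := hNt
      · -- diagonal
        subst hij
        rw [mul_comm (r i), mul_assoc, mul_inv_cancel₀ (ne_of_gt (hr_pos i)), mul_one]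
        exact hΛ_ge i
      · -- below diagonal : zero
        rw [hTtri i j hij]
        simp [hΛ0]
    refine ⟨h, hdeth, ?_, ?_⟩
    · rw [hconj]
      exact opNorm_le_of_entries _ hΛ0 hM_entries
    · -- norm bounds on h and h⁻¹
      have hex0 : (0:ℝ) ≤ ((d : ℝ) - 1) / 2 := by
        have : (1:ℝ) ≤ (d : ℝ) := by exact_mod_cast hd
        linarith
      set c : ℝ := t ^ (((d : ℝ) - 1) / 2) with hc
      have hc0 : 0 ≤ c := le_of_lt (Real.rpow_pos_of_pos ht0 _)
      have hexp_le : ∀ i : Fin d, e i ≤ ((d : ℝ) - 1) / 2 := by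
        intro i
        rw [he]
        have : (i : ℝ) ≤ (d : ℝ) - 1 := by
          have : (i : ℕ) ≤ d - 1 := Nat.le_pred_of_lt i.2
          have h2 := Nat.cast_le (α := ℝ).mpr this
          push_cast [Nat.cast_sub hd] at h2
          linarith
        linarith
      have hexp_ge : ∀ i : Fin d, -(e i) ≤ ((d : ℝ) - 1) / 2 := by
        intro i
        rw [he]
        have : (0:ℝ) ≤ (i : ℝ) := Nat.cast_nonneg _
        linarith
      have hDnorm : matrixOpNorm D ≤ c := by
        apply opNorm_diagonal_le _ hc0
        intro i
        rw [hv_abs, hr, hc]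
        exact Real.rpow_le_rpow_of_exponent_le ht1 (hexp_le i)
      have hDinvnorm : matrixOpNorm Dinv ≤ c := by
        apply opNorm_diagonal_le _ hc0
        intro i
        rw [norm_inv, hv_abs]
        have : (r i)⁻¹ = t ^ (-(e i)) := by
          rw [hr, ← Real.rpow_neg (le_of_lt ht0)]
        rw [this, hc]
        exact Real.rpow_le_rpow_of_exponent_le ht1 (hexp_ge i)
      have hUnorm : matrixOpNorm U = 1 := matrixOpNorm_unitary hd U hUU
      have hUHnorm : matrixOpNorm Uᴴ = 1 := by
        apply matrixOpNorm_unitary hd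
        rw [Matrix.conjTranspose_conjTranspose]
        exact hUUc
      have hhn : matrixOpNorm h ≤ c := by
        calc matrixOpNorm h ≤ matrixOpNorm D * matrixOpNorm Uᴴ := matrixOpNorm_mul_le _ _
          _ = matrixOpNorm D := by rw [hUHnorm, mul_one]
          _ ≤ c := hDnorm
      have hhinvn : matrixOpNorm h⁻¹ ≤ c := by
        rw [hinv_eq]
        calc matrixOpNorm hinv ≤ matrixOpNorm U * matrixOpNorm Dinv := matrixOpNorm_mul_le _ _
          _ = matrixOpNorm Dinv := by rw [hUnorm, one_mul]
          _ ≤ c := hDinvnorm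
      have hcN : c ≤ N ^ (((d : ℝ) - 1) / 2) := by
        rw [hc]
        exact Real.rpow_le_rpow (le_of_lt ht0) htN hex0
      exact max_le (le_trans hhn hcN) (le_trans hhinvn hcN)
end

section
/- Let Γ be a group, let F be a finite subset of Γ containing the identity such that F together with the inverses of its elements generates Γ, and let Γ_0 be a subgroup of Γ of finite index k. Then the set of elements of Γ_0 expressible as a product of at most 2k+1 elements of F ∪ F⁻¹ generates Γ_0. -/
open scoped Pointwise

section Aux

variable {Γ : Type*} [Group Γ]

/-- words of length ≤ n in S -/
def ShortWord (S : Set Γ) (n : ℕ) (g : Γ) : Prop :=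
  ∃ l : List Γ, l.length ≤ n ∧ (∀ x ∈ l, x ∈ S) ∧ l.prod = g

lemma shortWord_one (S : Set Γ) (n : ℕ) : ShortWord S n 1 :=
  ⟨[], by simp, by simp, rfl⟩

lemma shortWord_mono {S : Set Γ} {m n : ℕ} (h : m ≤ n) {g : Γ} (hg : ShortWord S m g) :
    ShortWord S n g := by
  obtain ⟨l, hl, hls, hlp⟩ := hg
  exact ⟨l, hl.trans h, hls, hlp⟩

lemma shortWord_mul {S : Set Γ} {m n : ℕ} {g h : Γ} (hg : ShortWord S m g)
    (hh : ShortWord S n h) : ShortWord S (m + n) (g * h) := by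
  obtain ⟨l, hl, hls, rfl⟩ := hg
  obtain ⟨l', hl', hls', rfl⟩ := hh
  refine ⟨l ++ l', by simpa using Nat.add_le_add hl hl', ?_, by simp⟩
  intro x hx
  rcases List.mem_append.1 hx with h | h
  · exact hls x h
  · exact hls' x h

lemma shortWord_inv {S : Set Γ} (hS : ∀ s ∈ S, s⁻¹ ∈ S) {n : ℕ} {g : Γ}
    (hg : ShortWord S n g) : ShortWord S n g⁻¹ := by
  obtain ⟨l, hl, hls, rfl⟩ := hg
  refine ⟨(l.map fun x => x⁻¹).reverse, by simpa using hl, ?_, (List.prod_inv_reverse l).symm⟩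
  intro x hx
  simp only [List.mem_reverse, List.mem_map] at hx
  obtain ⟨y, hy, rfl⟩ := hx
  exact hS y (hls y hy)

end Aux

/-- **Generating a finite-index subgroup by short words.** Let `F` be a finite subset of a group
`Γ` containing the identity, such that `F` together with the inverses of its elements generates
`Γ`, and let `Γ₀` be a subgroup of index `k`. Then the set of elements of `Γ₀` expressible as
products of at most `2k+1` elements of `F ∪ F⁻¹` generates `Γ₀`. -/
theorem finite_index_subgroup_generated_by_short_words
    {Γ : Type*} [Group Γ] (F : Set Γ) (hF : F.Finite) (h1 : (1 : Γ) ∈ F)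
    (hgen : Subgroup.closure (F ∪ F⁻¹) = ⊤)
    (Γ₀ : Subgroup Γ) (k : ℕ) (hk : Γ₀.index = k) (hk0 : k ≠ 0) :
    Subgroup.closure {x : Γ | x ∈ Γ₀ ∧
        ∃ l : List Γ, l.length ≤ 2 * k + 1 ∧ (∀ g ∈ l, g ∈ F ∪ F⁻¹) ∧ l.prod = x} = Γ₀ := by
  classical
  set S : Set Γ := F ∪ F⁻¹ with hS
  have hSsym : ∀ s ∈ S, s⁻¹ ∈ S := by
    rintro s (hs | hs)
    · exact Or.inr (by simpa using hs)
    · exact Or.inl (by simpa using hs)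
  -- every element is a word in S
  have hword : ∀ g : Γ, ∃ n, ShortWord S n g := by
    intro g
    have hg : g ∈ (Subgroup.closure S).toSubmonoid := by rw [hgen]; trivial
    rw [Subgroup.closure_toSubmonoid] at hg
    obtain ⟨l, hls, hlp⟩ := Submonoid.exists_list_of_mem_closure hg
    refine ⟨l.length, l, le_rfl, ?_, hlp⟩
    intro x hx
    rcases hls x hx with h | h
    · exact h
    · simpa using hSsym _ h
  -- quotient is finite with k elements
  have hcard : Nat.card (Γ ⧸ Γ₀) = k := hk
  have hfin : Finite (Γ ⧸ Γ₀) := by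
    rcases Nat.card_ne_zero.1 (hcard ▸ hk0) with ⟨_, h⟩; exact h
  set q : Γ → Γ ⧸ Γ₀ := QuotientGroup.mk with hq
  have hqeq : ∀ a b : Γ, q a = q b ↔ a⁻¹ * b ∈ Γ₀ := fun a b => QuotientGroup.eq
  set D : ℕ → Set (Γ ⧸ Γ₀) := fun n => {x | ∃ g, ShortWord S n g ∧ q g = x} with hD
  have hDmono : ∀ {m n}, m ≤ n → D m ⊆ D n := by
    rintro m n h x ⟨g, hg, rfl⟩
    exact ⟨g, shortWord_mono h hg, rfl⟩
  -- stabilization step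
  have hstep : ∀ n, D n = D (n + 1) → D (n + 1) = D (n + 2) := by
    intro n hn
    refine le_antisymm (hDmono (by omega)) ?_
    rintro x ⟨g, ⟨l, hl, hls, rfl⟩, rfl⟩
    match l, hl, hls with
    | [], _, _ => exact ⟨1, shortWord_one _ _, by simp⟩
    | (s :: l'), hl, hls =>
      have hmem : q l'.prod ∈ D n := by
        rw [hn]
        exact ⟨l'.prod, ⟨l', by simpa using Nat.lt_succ_iff.1 hl,
          fun x hx => hls x (by simp [hx]), rfl⟩, rfl⟩
      obtain ⟨w, hw, hwq⟩ := hmem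
      have hsw : ShortWord S 1 s := ⟨[s], by simp, by simpa using hls s (by simp), by simp⟩
      refine ⟨s * w, shortWord_mono (by omega) (shortWord_mul hsw hw), ?_⟩
      show q (s * w) = q ((s :: l').prod)
      rw [hqeq] at hwq ⊢
      rw [List.prod_cons]
      have : (s * w)⁻¹ * (s * l'.prod) = w⁻¹ * l'.prod := by group
      rw [this]
      exact hwq
  have hsucc : ∀ n, D n = D (n + 1) → ∀ m, D (n + m) = D (n + m + 1) := by
    intro n hn m
    induction m with
    | zero => exact hn
    | succ m ih => exact hstep (n + m) ih
  have hstab : ∀ n, D n = D (n + 1) → ∀ m, D (n + m) = D n := by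
    intro n hn m
    induction m with
    | zero => rfl
    | succ m ih => rw [show n + (m+1) = n + m + 1 by omega, ← hsucc n hn m, ih]
  have hDunion : ∀ x : Γ ⧸ Γ₀, ∃ n, x ∈ D n := by
    intro x
    obtain ⟨g, rfl⟩ := QuotientGroup.mk_surjective x
    obtain ⟨n, hn⟩ := hword g
    exact ⟨n, g, hn, rfl⟩
  have hstabuniv : ∀ n, D n = D (n + 1) → D n = Set.univ := by
    intro n hn
    ext x
    simp only [Set.mem_univ, iff_true]
    obtain ⟨m, hm⟩ := hDunion x
    rcases le_total m n with h | h
    · exact hDmono h hm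
    · rw [← hstab n hn (m - n)]
      exact hDmono (by omega) hm
  -- cardinality argument: D (k-1) = univ
  have hcardD : ∀ n, D n = Set.univ ∨ n + 1 ≤ (D n).ncard := by
    intro n
    induction n with
    | zero =>
      right
      have h0 : q 1 ∈ D 0 := ⟨1, shortWord_one _ _, rfl⟩
      have hpos : 0 < (D 0).ncard := (Set.ncard_pos (Set.toFinite _)).2 ⟨_, h0⟩
      omega
    | succ n ih =>
      rcases ih with h | h
      · left
        exact Set.eq_univ_of_univ_subset (h ▸ hDmono (by omega))
      · by_cases heq : D n = D (n + 1)
        · left; rw [← heq]; exact hstabuniv n heq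
        · right
          have hss : D n ⊂ D (n + 1) := (hDmono (by omega)).ssubset_of_ne heq
          have hlt : (D n).ncard < (D (n + 1)).ncard :=
            Set.ncard_lt_ncard hss (Set.toFinite _)
          omega
  have hDk : D (k - 1) = Set.univ := by
    rcases hcardD (k - 1) with h | h
    · exact h
    · have h2 : (D (k - 1)).ncard ≤ k := by
        have := Set.ncard_le_ncard (Set.subset_univ (D (k - 1))) (Set.toFinite _)
        rwa [Set.ncard_univ, hcard] at this
      refine Set.eq_of_subset_of_ncard_le (Set.subset_univ _) ?_ (Set.toFinite _)
      rw [Set.ncard_univ, hcard]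
      omega
  -- choose short representatives
  have hrepexists : ∀ x : Γ ⧸ Γ₀, ∃ g, ShortWord S (k - 1) g ∧ q g = x := by
    intro x
    have : x ∈ D (k - 1) := hDk ▸ Set.mem_univ x
    exact this
  set rep : Γ ⧸ Γ₀ → Γ := fun x =>
    if x = q 1 then 1 else Classical.choose (hrepexists x) with hrep
  have hrepword : ∀ x, ShortWord S (k - 1) (rep x) := by
    intro x
    simp only [hrep]
    split
    · exact shortWord_one _ _
    · exact (Classical.choose_spec (hrepexists x)).1
  have hrepq : ∀ x, q (rep x) = x := by
    intro x
    simp only [hrep]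
    split
    · next h => rw [h]
    · exact (Classical.choose_spec (hrepexists x)).2
  have hrepone : rep (q 1) = 1 := by simp [hrep]
  set T : Set Γ := {x : Γ | x ∈ Γ₀ ∧
      ∃ l : List Γ, l.length ≤ 2 * k + 1 ∧ (∀ g ∈ l, g ∈ F ∪ F⁻¹) ∧ l.prod = x} with hT
  set H := Subgroup.closure T with hH
  -- main induction
  have main : ∀ l : List Γ, (∀ x ∈ l, x ∈ S) → (rep (q l.prod))⁻¹ * l.prod ∈ H := by
    intro l
    induction l with
    | nil =>
      intro _
      show (rep (q (List.prod [])))⁻¹ * List.prod [] ∈ H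
      rw [List.prod_nil, hrepone]
      simpa using H.one_mem
    | cons s l' ih =>
      intro hls
      have ihm := ih (fun x hx => hls x (by simp [hx]))
      set r : Γ := rep (q ((s :: l').prod)) with hr
      set r' : Γ := rep (q l'.prod) with hr'
      have ha : r⁻¹ * (s * l'.prod) ∈ Γ₀ := by
        have := hrepq (q ((s :: l').prod))
        rw [hqeq] at this
        rwa [List.prod_cons] at this
      have hb : (l'.prod)⁻¹ * r' ∈ Γ₀ := by
        have := hrepq (q l'.prod)
        rw [hqeq] at this
        simpa using Γ₀.inv_mem this
      have key : r⁻¹ * s * r' ∈ H := by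
        apply Subgroup.subset_closure
        refine ⟨?_, ?_⟩
        · have : r⁻¹ * s * r' = (r⁻¹ * (s * l'.prod)) * ((l'.prod)⁻¹ * r') := by group
          rw [this]
          exact Γ₀.mul_mem ha hb
        · have h1w : ShortWord S (k - 1) r⁻¹ := shortWord_inv hSsym (hrepword _)
          have h2w : ShortWord S 1 s := ⟨[s], by simp, by simpa using hls s (by simp), by simp⟩
          have h3w : ShortWord S (k - 1) r' := hrepword _
          exact shortWord_mono (by omega) (shortWord_mul (shortWord_mul h1w h2w) h3w)
      have hdec : r⁻¹ * (s :: l').prod = (r⁻¹ * s * r') * (r'⁻¹ * l'.prod) := by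
        rw [List.prod_cons]; group
      rw [hdec]
      exact H.mul_mem key ihm
  -- conclude
  apply le_antisymm
  · rw [Subgroup.closure_le]
    intro x hx
    exact hx.1
  · intro g hg
    obtain ⟨n, l, _, hls, hlp⟩ := hword g
    have hq1 : q g = q 1 := by
      rw [hqeq]
      simpa using Γ₀.inv_mem hg
    have hmem := main l hls
    rw [hlp, hq1, hrepone] at hmem
    simpa using hmem
end
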